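/- arXiv:1801.02125 — 3 statements merged into one kernel-verified Lean document; each statement's English description precedes it below -/
import Mathlib

section
/- Let γ ∈ ℝ^K be nonzero, c > 0, c₀ > 0, μ₁ := c/(c‖γ‖² + c₀), F := I − μ₁γγᵀ, and G := cF² + c₀μ₁²γγᵀ. Then G is a symmetric positive definite matrix. -/
open Matrix

theorem stmt_1 (K : ℕ) (hK : 0 < K) (γ : Fin K → ℝ) (hγ : γ ≠ 0)
    (c c₀ : ℝ) (hc : 0 < c) (hc₀ : 0 < c₀)
    (μ₁ : ℝ) (hμ₁ : μ₁ = c / (c * (γ ⬝ᵥ γ) + c₀))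
    (F G : Matrix (Fin K) (Fin K) ℝ)
    (hF : F = 1 - μ₁ • vecMulVec γ γ)
    (hG : G = c • (F * F) + (c₀ * μ₁ ^ 2) • vecMulVec γ γ) :
    G.PosDef := by
  have hγγ : (0:ℝ) ≤ γ ⬝ᵥ γ := by
    have := dotProduct_self_star_nonneg γ
    simpa using this
  have hden : (0:ℝ) < c * (γ ⬝ᵥ γ) + c₀ := by positivity
  have hμpos : 0 < μ₁ := by rw [hμ₁]; positivity
  -- symmetry of vecMulVec γ γ
  have hvT : (vecMulVec γ γ)ᵀ = vecMulVec γ γ := by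
    ext i j; simp [vecMulVec_apply, transpose_apply, mul_comm]
  have hFT : Fᵀ = F := by
    rw [hF]; simp [transpose_sub, transpose_smul, hvT]
  -- action of vecMulVec
  have hvmv : ∀ x : Fin K → ℝ, vecMulVec γ γ *ᵥ x = (γ ⬝ᵥ x) • γ := by
    intro x; ext i
    simp [vecMulVec_apply, mulVec, dotProduct, Finset.mul_sum]
    rw [Finset.sum_mul]; exact Finset.sum_congr rfl fun j _ => by ring
  rw [posDef_iff_dotProduct_mulVec]
  constructor
  · rw [hG]
    unfold Matrix.IsHermitian
    rw [conjTranspose_eq_transpose_of_trivial]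
    rw [transpose_add, transpose_smul, transpose_smul, transpose_mul, hFT, hvT]
  · intro x hx
    have key : x ⬝ᵥ (G *ᵥ x) = c * ((F *ᵥ x) ⬝ᵥ (F *ᵥ x)) + (c₀ * μ₁ ^ 2) * (γ ⬝ᵥ x)^2 := by
      have h1 : x ⬝ᵥ ((F * F) *ᵥ x) = (F *ᵥ x) ⬝ᵥ (F *ᵥ x) := by
        rw [← mulVec_mulVec, dotProduct_mulVec, ← mulVec_transpose, hFT]
      have h2 : x ⬝ᵥ γ = γ ⬝ᵥ x := dotProduct_comm x γ
      rw [hG, add_mulVec, smul_mulVec, smul_mulVec, dotProduct_add,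
        dotProduct_smul, dotProduct_smul, hvmv, h1, dotProduct_smul, h2,
        smul_eq_mul, smul_eq_mul, smul_eq_mul]
      ring
    have hFx2 : (0:ℝ) ≤ (F *ᵥ x) ⬝ᵥ (F *ᵥ x) := by
      have := dotProduct_self_star_nonneg (F *ᵥ x); simpa using this
    simp only [RCLike.re_to_real, star_trivial]
    rw [key]
    by_cases hgx : γ ⬝ᵥ x = 0
    · have hFx : F *ᵥ x = x := by
        rw [hF, sub_mulVec, one_mulVec, smul_mulVec, hvmv, hgx, zero_smul,
          smul_zero, sub_zero]
      rw [hFx, hgx]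
      have : 0 < x ⬝ᵥ x := by
        have h := dotProduct_self_star_pos_iff (v := x)
        simp only [star_trivial] at h
        exact h.2 hx
      nlinarith
    · have : 0 < (c₀ * μ₁ ^ 2) * (γ ⬝ᵥ x)^2 := by positivity
      nlinarith
end

section
/- Let W ∈ ℝ^{n×n} be symmetric positive definite and A ∈ ℝ^{n×n} symmetric positive semidefinite with A ≠ 0. Define f(δ) := tr(A (W⁻¹ + δA)⁻¹) for δ in the interval where W⁻¹ + δA is positive definite. Then f is continuous and strictly decreasing on this interval, tends to +∞ as δ approaches the left endpoint of the interval, and tends to 0 as δ → +∞; hence for every target value ρ > 0 the equation f(δ) = ρ has a unique solution. -/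
open Matrix Filter Topology

lemma aux_posDef_conj {n : ℕ} {V P : Matrix (Fin n) (Fin n) ℝ}
    (hV : IsUnit V) (hP : P.PosDef) : (V * P * Vᴴ).PosDef := by
  refine PosDef.of_dotProduct_mulVec_pos (isHermitian_mul_mul_conjTranspose _ hP.1) fun x hx => ?_
  have hVT : IsUnit Vᵀ := by
    have : IsUnit Vᵀ.det := by rw [Matrix.det_transpose]; exact (Matrix.isUnit_iff_isUnit_det V).1 hV
    exact (Matrix.isUnit_iff_isUnit_det _).2 this
  have hinj : Function.Injective (Vᵀ.mulVec) := Matrix.mulVec_injective_iff_isUnit.mpr hVT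
  have hxne : Vᵀ *ᵥ x ≠ 0 := by
    intro h
    exact hx (hinj (by simpa using h))
  have key : star x ⬝ᵥ (V * P * Vᴴ) *ᵥ x
      = star (Vᵀ *ᵥ x) ⬝ᵥ P *ᵥ (Vᵀ *ᵥ x) := by
    simp only [star_trivial, conjTranspose_eq_transpose_of_trivial, ← Matrix.mulVec_mulVec]
    rw [Matrix.dotProduct_mulVec, Matrix.mulVec_transpose]
  rw [key]
  exact hP.dotProduct_mulVec_pos hxne

lemma aux_posDef_conj_iff {n : ℕ} {V : Matrix (Fin n) (Fin n) ℝ} (hV : IsUnit V)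
    (P : Matrix (Fin n) (Fin n) ℝ) : (V * P * Vᴴ).PosDef ↔ P.PosDef := by
  constructor
  · intro h
    have hVi : IsUnit V⁻¹ := Matrix.isUnit_nonsing_inv_iff.2 hV
    have hdet : IsUnit V.det := (Matrix.isUnit_iff_isUnit_det V).1 hV
    have := aux_posDef_conj hVi h
    have e : V⁻¹ * (V * P * Vᴴ) * (V⁻¹)ᴴ = P := by
      rw [Matrix.conjTranspose_nonsing_inv]
      rw [show V⁻¹ * (V * P * Vᴴ) * (Vᴴ)⁻¹ = (V⁻¹ * V) * P * (Vᴴ * (Vᴴ)⁻¹) by noncomm_ring]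
      rw [Matrix.nonsing_inv_mul _ hdet, Matrix.mul_nonsing_inv _ (by rw [Matrix.det_conjTranspose]; exact hdet.star)]
      simp
    rwa [e] at this
  · exact aux_posDef_conj hV

theorem stmt_10 (n : ℕ) (hn : 0 < n)
    (W A : Matrix (Fin n) (Fin n) ℝ)
    (hW : W.PosDef) (hA : A.PosSemidef) (hA0 : A ≠ 0)
    (S : Set ℝ) (hS : S = {δ : ℝ | (W⁻¹ + δ • A).PosDef})
    (f : ℝ → ℝ) (hf : ∀ δ, f δ = (A * (W⁻¹ + δ • A)⁻¹).trace) :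
    ContinuousOn f S ∧ StrictAntiOn f S ∧
    Tendsto f (𝓝[>] (sInf S)) atTop ∧
    Tendsto f atTop (𝓝 0) ∧
    ∀ ρ : ℝ, 0 < ρ → ∃! δ : ℝ, δ ∈ S ∧ f δ = ρ := by
  set Q : Matrix (Fin n) (Fin n) ℝ := (open scoped MatrixOrder in CFC.sqrt W) with hQdef
  have hQps : Q.PosSemidef := by open scoped MatrixOrder in exact (CFC.sqrt_nonneg W).posSemidef
  have hQQ : Q * Q = W := by open scoped MatrixOrder in exact CFC.sqrt_mul_sqrt_self W hW.posSemidef.nonneg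
  have hQH : Qᴴ = Q := hQps.1
  have hQdet : IsUnit Q.det := by
    have h1 : Q.det * Q.det = W.det := by rw [← Matrix.det_mul, hQQ]
    have h2 := hW.det_pos
    refine isUnit_iff_ne_zero.2 fun h => ?_
    rw [h, mul_zero] at h1
    exact h2.ne h1
  have hQunit : IsUnit Q := (Matrix.isUnit_iff_isUnit_det Q).2 hQdet
  have hQiQ : Q⁻¹ * Q = 1 := Matrix.nonsing_inv_mul Q hQdet
  have hQQi : Q * Q⁻¹ = 1 := Matrix.mul_nonsing_inv Q hQdet
  set M : Matrix (Fin n) (Fin n) ℝ := Q * A * Q with hMdef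
  have hM : M.PosSemidef := by
    have := hA.mul_mul_conjTranspose_same Q
    rwa [hQH] at this
  set lam : Fin n → ℝ := hM.1.eigenvalues with hlam
  set U : Matrix (Fin n) (Fin n) ℝ := (hM.1.eigenvectorUnitary : Matrix (Fin n) (Fin n) ℝ) with hU
  have hspec : M = U * diagonal lam * Uᴴ := by
    have := hM.1.spectral_theorem
    simpa [RCLike.ofReal_real_eq_id, Matrix.star_eq_conjTranspose] using this
  have hUU : U * Uᴴ = 1 := by
    have := (Matrix.mem_unitaryGroup_iff).mp (hM.1.eigenvectorUnitary).2
    simpa [Matrix.star_eq_conjTranspose] using this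
  have hUdet : IsUnit U.det := by
    refine isUnit_iff_ne_zero.2 fun h => ?_
    have := congrArg Matrix.det hUU
    rw [Matrix.det_mul, h, zero_mul, Matrix.det_one] at this
    exact zero_ne_one this
  have hUunit : IsUnit U := (Matrix.isUnit_iff_isUnit_det U).2 hUdet
  set V : Matrix (Fin n) (Fin n) ℝ := Q⁻¹ * U with hVdef
  have hVunit : IsUnit V := ((Matrix.isUnit_nonsing_inv_iff).2 hQunit).mul hUunit
  have hVdet : IsUnit V.det := (Matrix.isUnit_iff_isUnit_det V).1 hVunit
  have hVH : Vᴴ = Uᴴ * Q⁻¹ := by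
    rw [hVdef, Matrix.conjTranspose_mul, Matrix.conjTranspose_nonsing_inv, hQH]
  have hAM : A = Q⁻¹ * M * Q⁻¹ := by
    rw [hMdef, show Q⁻¹ * (Q * A * Q) * Q⁻¹ = (Q⁻¹ * Q) * A * (Q * Q⁻¹) by noncomm_ring,
      hQiQ, hQQi, Matrix.one_mul, Matrix.mul_one]
  have hAeq : A = V * diagonal lam * Vᴴ := by
    rw [hVH, hVdef, hAM, hspec]
    noncomm_ring
  have hWinv : W⁻¹ = Q⁻¹ * Q⁻¹ := by rw [← hQQ, Matrix.mul_inv_rev]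
  have hKey : ∀ δ : ℝ, W⁻¹ + δ • A = V * diagonal (fun i => 1 + δ * lam i) * Vᴴ := by
    intro δ
    have hD : (diagonal (fun i => 1 + δ * lam i) : Matrix (Fin n) (Fin n) ℝ)
        = 1 + δ • diagonal lam := by
      rw [← Matrix.diagonal_one, ← Matrix.diagonal_smul, ← Matrix.diagonal_add]
      rfl
    have hVV : V * Vᴴ = W⁻¹ := by
      rw [hVH, hVdef, hWinv, show Q⁻¹ * U * (Uᴴ * Q⁻¹) = Q⁻¹ * (U * Uᴴ) * Q⁻¹ by noncomm_ring,
        hUU, Matrix.mul_one]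
    rw [hD, Matrix.mul_add, Matrix.add_mul, Matrix.mul_one, hVV, mul_smul_comm, smul_mul_assoc,
      ← hAeq]
  have hSchar : ∀ δ : ℝ, δ ∈ S ↔ ∀ i, 0 < 1 + δ * lam i := by
    intro δ
    rw [hS, Set.mem_setOf_eq, hKey δ, aux_posDef_conj_iff hVunit, Matrix.posDef_diagonal_iff]
  obtain ⟨i₀, -, hi₀⟩ := Finset.exists_max_image (Finset.univ : Finset (Fin n)) lam
    ⟨⟨0, hn⟩, Finset.mem_univ _⟩
  have lamnn : ∀ i, 0 ≤ lam i := fun i => hM.eigenvalues_nonneg i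
  have hlmax : 0 < lam i₀ := by
    rcases (lamnn i₀).lt_or_eq with h | h
    · exact h
    · exfalso
      apply hA0
      have hall : lam = 0 := by
        funext i
        have h2 := hi₀ i (Finset.mem_univ _)
        rw [← h] at h2
        exact le_antisymm h2 (lamnn i)
      rw [hAeq, hall, show Matrix.diagonal (0 : Fin n → ℝ) = 0 from Matrix.diagonal_zero,
        Matrix.mul_zero, Matrix.zero_mul]
  have hSIoi : S = Set.Ioi (-(lam i₀)⁻¹) := by
    ext δ
    rw [hSchar δ, Set.mem_Ioi]
    constructor
    · intro h
      have h1 := h i₀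
      have h3 : lam i₀ * (lam i₀)⁻¹ = 1 := mul_inv_cancel₀ hlmax.ne'
      nlinarith [mul_pos (inv_pos.2 hlmax) h1]
    · intro hδ i
      rcases (lamnn i).lt_or_eq with h | h
      · have hle : lam i ≤ lam i₀ := hi₀ i (Finset.mem_univ _)
        have h3 : lam i₀ * (lam i₀)⁻¹ = 1 := mul_inv_cancel₀ hlmax.ne'
        nlinarith [mul_lt_mul_of_pos_right hδ h,
          mul_le_mul_of_nonneg_left hle (le_of_lt (inv_pos.2 hlmax))]
      · rw [← h]; norm_num
  have hSInf : sInf S = -(lam i₀)⁻¹ := by rw [hSIoi]; exact csInf_Ioi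
  set g : ℝ → ℝ := fun δ => ∑ i, lam i * (1 + δ * lam i)⁻¹ with hg
  have hfg : ∀ δ ∈ S, f δ = g δ := by
    intro δ hδ
    have hd := (hSchar δ).1 hδ
    have hDinv : (diagonal (fun i => 1 + δ * lam i) : Matrix (Fin n) (Fin n) ℝ)⁻¹
        = diagonal (fun i => (1 + δ * lam i)⁻¹) := by
      refine Matrix.inv_eq_right_inv ?_
      rw [Matrix.diagonal_mul_diagonal, ← Matrix.diagonal_one]
      exact congrArg _ (funext fun i => mul_inv_cancel₀ (hd i).ne')
    have hVHdet : IsUnit Vᴴ.det := by rw [Matrix.det_conjTranspose]; exact hVdet.star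
    have hVHi : Vᴴ * (Vᴴ)⁻¹ = 1 := Matrix.mul_nonsing_inv _ hVHdet
    have hViV : V⁻¹ * V = 1 := Matrix.nonsing_inv_mul _ hVdet
    rw [hf, hKey δ, Matrix.mul_inv_rev, Matrix.mul_inv_rev, hDinv, hAeq]
    rw [show V * diagonal lam * Vᴴ * ((Vᴴ)⁻¹ * (diagonal (fun i => (1 + δ * lam i)⁻¹) * V⁻¹))
        = V * (diagonal lam * (Vᴴ * (Vᴴ)⁻¹) * diagonal (fun i => (1 + δ * lam i)⁻¹)) * V⁻¹ by
      noncomm_ring]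
    rw [hVHi, Matrix.mul_one, Matrix.trace_mul_comm, ← Matrix.mul_assoc, hViV, Matrix.one_mul,
      Matrix.diagonal_mul_diagonal, Matrix.trace_diagonal, hg]
  -- part 1: continuity
  have hterm : ∀ i : Fin n, ContinuousOn (fun δ : ℝ => lam i * (1 + δ * lam i)⁻¹) S := by
    intro i
    refine continuousOn_const.mul (ContinuousOn.inv₀ ?_ ?_)
    · exact (continuous_const.add (continuous_id.mul continuous_const)).continuousOn
    · intro δ hδ
      exact ((hSchar δ).1 hδ i).ne'
  have hgc : ContinuousOn g S := by
    rw [hg]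
    exact continuousOn_finset_sum Finset.univ fun i _ => hterm i
  have h1 : ContinuousOn f S := hgc.congr hfg
  -- part 2: strict antitonicity
  have h2 : StrictAntiOn f S := by
    intro a ha b hb hab
    rw [hfg a ha, hfg b hb, hg]
    refine Finset.sum_lt_sum (fun i _ => ?_) ⟨i₀, Finset.mem_univ _, ?_⟩
    · have da := (hSchar a).1 ha i
      have db := (hSchar b).1 hb i
      rcases (lamnn i).lt_or_eq with h | h
      · refine mul_le_mul_of_nonneg_left ?_ (lamnn i)
        refine inv_anti₀ da ?_
        nlinarith
      · rw [← h]; ring_nf; rfl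
    · have da := (hSchar a).1 ha i₀
      have db := (hSchar b).1 hb i₀
      refine (mul_lt_mul_iff_right₀ hlmax).2 ?_
      refine inv_strictAnti₀ da ?_
      nlinarith
  -- part 3: blow-up at the left endpoint
  have h3 : Tendsto f (𝓝[>] (sInf S)) atTop := by
    rw [hSInf]
    have hmem : ∀ᶠ δ in 𝓝[>] (-(lam i₀)⁻¹), δ ∈ S := by
      rw [hSIoi]
      exact eventually_mem_nhdsWithin
    have hlow : Tendsto (fun δ : ℝ => lam i₀ * (1 + δ * lam i₀)⁻¹)
        (𝓝[>] (-(lam i₀)⁻¹)) atTop := by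
      refine Tendsto.const_mul_atTop hlmax ?_
      have hφ : Tendsto (fun δ : ℝ => 1 + δ * lam i₀) (𝓝[>] (-(lam i₀)⁻¹)) (𝓝[>] 0) := by
        refine tendsto_nhdsWithin_of_tendsto_nhds_of_eventually_within _ ?_ ?_
        · have hc : Tendsto (fun δ : ℝ => 1 + δ * lam i₀) (𝓝 (-(lam i₀)⁻¹))
              (𝓝 (1 + (-(lam i₀)⁻¹) * lam i₀)) :=
            (continuous_const.add (continuous_id.mul continuous_const)).tendsto _
          have : 1 + (-(lam i₀)⁻¹) * lam i₀ = 0 := by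
            field_simp; norm_num
          rw [this] at hc
          exact hc.mono_left nhdsWithin_le_nhds
        · refine eventually_mem_nhdsWithin.mono fun δ hδ => ?_
          have : δ ∈ S := by rw [hSIoi]; exact hδ
          exact Set.mem_Ioi.2 ((hSchar δ).1 this i₀)
      exact hφ.inv_tendsto_nhdsGT_zero
    refine tendsto_atTop_mono' _ (hmem.mono fun δ hδ => ?_) hlow
    rw [hfg δ hδ, hg]
    refine Finset.single_le_sum (f := fun i => lam i * (1 + δ * lam i)⁻¹) (fun i _ => ?_)
      (Finset.mem_univ i₀)
    exact mul_nonneg (lamnn i) (inv_nonneg.2 ((hSchar δ).1 hδ i).le)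
  -- part 4: limit 0 at infinity
  have h4 : Tendsto f atTop (𝓝 0) := by
    have hg0 : Tendsto g atTop (𝓝 0) := by
      have hterm0 : ∀ i : Fin n,
          Tendsto (fun δ : ℝ => lam i * (1 + δ * lam i)⁻¹) atTop (𝓝 0) := by
        intro i
        rcases (lamnn i).lt_or_eq with h | h
        · have hden : Tendsto (fun δ : ℝ => 1 + δ * lam i) atTop atTop :=
            tendsto_atTop_add_const_left _ 1 (Tendsto.atTop_mul_const h tendsto_id)
          have := hden.inv_tendsto_atTop.const_mul (lam i)
          simpa using this
        · simp [← h]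
      have := tendsto_finset_sum Finset.univ fun i _ => hterm0 i
      rw [hg]
      simpa using this
    refine hg0.congr' ?_
    filter_upwards [eventually_gt_atTop (-(lam i₀)⁻¹)] with δ hδ
    exact (hfg δ (by rw [hSIoi]; exact hδ)).symm
  refine ⟨h1, h2, h3, h4, ?_⟩
  -- part 5: unique solution
  intro ρ hρ
  have hne : (𝓝[>] (sInf S)).NeBot := by rw [hSInf]; exact nhdsGT_neBot _
  have hSmem : ∀ᶠ δ in 𝓝[>] (sInf S), δ ∈ S := by
    rw [hSInf, hSIoi]
    exact eventually_mem_nhdsWithin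
  obtain ⟨a, haρ, haS⟩ := ((h3.eventually_ge_atTop ρ).and hSmem).exists
  obtain ⟨b, hbρ, hbS⟩ := ((h4.eventually_lt_const hρ).and
    ((eventually_gt_atTop (-(lam i₀)⁻¹)).mono fun δ hδ => (by rw [hSIoi]; exact hδ : δ ∈ S))).exists
  have hab : a ≤ b := by
    by_contra hba
    push_neg at hba
    have := h2 hbS haS hba
    linarith
  have hsub : Set.Icc a b ⊆ S := by
    intro x hx
    rw [hSIoi] at haS ⊢
    exact lt_of_lt_of_le haS hx.1
  obtain ⟨δ, hδmem, hδeq⟩ := intermediate_value_Icc' hab (h1.mono hsub) ⟨hbρ.le, haρ⟩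
  refine ⟨δ, ⟨hsub hδmem, hδeq⟩, ?_⟩
  rintro y ⟨hyS, hyρ⟩
  exact h2.injOn hyS (hsub hδmem) (by rw [hyρ, hδeq])
end

section
/- Let γ ∈ ℝ^K be nonzero, c > 0, c₀ > 0, μ₀ ∈ ℝ. Define μ₁ := c/(c‖γ‖² + c₀), μ₂ := c₀μ₀/(c‖γ‖² + c₀), μ₃ := μ₁²(c₀/c + ‖γ‖²) − 2μ₁, G := c(I + μ₃γγᵀ), ξ₀ := (cμ₂ + (c₀μ₁μ₀ − cμ₂)μ₁‖γ‖²) G⁻¹γ, B := (1/2)⟨Gξ₀, ξ₀⟩ − (1/2)cμ₂²‖γ‖² − (1/2)c₀μ₁²μ₀²‖γ‖⁴, and Loss(ξ) := min_{b₀∈ℝ} [(c₀/2)(b₀ − μ₀)² + (c/2)‖ξ − b₀γ‖²]. Then for all ξ ∈ ℝ^K, Loss(ξ) + B = (1/2)⟨G(ξ − ξ₀), ξ − ξ₀⟩. -/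
open Matrix

private lemma vmv_mulVec {K : ℕ} (γ x : Fin K → ℝ) :
    (vecMulVec γ γ).mulVec x = (γ ⬝ᵥ x) • γ := by
  ext i
  simp only [mulVec, dotProduct, vecMulVec_apply, Pi.smul_apply, smul_eq_mul,
    Finset.sum_mul, Finset.mul_sum]
  exact Finset.sum_congr rfl fun j _ => by ring

private lemma vmv_mul {K : ℕ} (γ : Fin K → ℝ) :
    vecMulVec γ γ * vecMulVec γ γ = (γ ⬝ᵥ γ) • vecMulVec γ γ := by
  ext i j
  simp only [mul_apply, vecMulVec_apply, Matrix.smul_apply, smul_eq_mul, dotProduct,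
    Finset.sum_mul]
  exact Finset.sum_congr rfl fun k _ => by ring

set_option maxHeartbeats 1000000 in
theorem stmt_16 (K : ℕ) (hK : 0 < K) (γ : Fin K → ℝ) (hγ : γ ≠ 0)
    (c c₀ μ₀ : ℝ) (hc : 0 < c) (hc₀ : 0 < c₀)
    (μ₁ μ₂ μ₃ : ℝ)
    (hμ₁ : μ₁ = c / (c * (γ ⬝ᵥ γ) + c₀))
    (hμ₂ : μ₂ = c₀ * μ₀ / (c * (γ ⬝ᵥ γ) + c₀))
    (hμ₃ : μ₃ = μ₁ ^ 2 * (c₀ / c + γ ⬝ᵥ γ) - 2 * μ₁)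
    (G : Matrix (Fin K) (Fin K) ℝ)
    (hG : G = c • ((1 : Matrix (Fin K) (Fin K) ℝ) + μ₃ • vecMulVec γ γ))
    (ξ₀ : Fin K → ℝ)
    (hξ₀ : ξ₀ = (c * μ₂ + (c₀ * μ₁ * μ₀ - c * μ₂) * μ₁ * (γ ⬝ᵥ γ)) • G⁻¹.mulVec γ)
    (B : ℝ)
    (hB : B = 1 / 2 * (G.mulVec ξ₀ ⬝ᵥ ξ₀) - 1 / 2 * c * μ₂ ^ 2 * (γ ⬝ᵥ γ)
        - 1 / 2 * c₀ * μ₁ ^ 2 * μ₀ ^ 2 * (γ ⬝ᵥ γ) ^ 2)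
    (Loss : (Fin K → ℝ) → ℝ)
    (hLoss : ∀ ξ, Loss ξ = ⨅ b₀ : ℝ,
        (c₀ / 2 * (b₀ - μ₀) ^ 2 + c / 2 * ((ξ - b₀ • γ) ⬝ᵥ (ξ - b₀ • γ)))) :
    ∀ ξ : Fin K → ℝ, Loss ξ + B = 1 / 2 * (G.mulVec (ξ - ξ₀) ⬝ᵥ (ξ - ξ₀)) := by
  have hs : 0 < γ ⬝ᵥ γ := by
    have hnn : 0 ≤ γ ⬝ᵥ γ := by
      rw [dotProduct]
      exact Finset.sum_nonneg fun i _ => mul_self_nonneg (γ i)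
    rcases hnn.lt_or_eq with h | h
    · exact h
    · exact absurd (dotProduct_self_eq_zero.mp h.symm) hγ
  have hd : 0 < c * (γ ⬝ᵥ γ) + c₀ := by positivity
  have hd' : c * (γ ⬝ᵥ γ) + c₀ ≠ 0 := ne_of_gt hd
  have hc' : c ≠ 0 := ne_of_gt hc
  have hc₀' : c₀ ≠ 0 := ne_of_gt hc₀
  have hμ₃' : μ₃ = -(c / (c * (γ ⬝ᵥ γ) + c₀)) := by
    rw [hμ₃, hμ₁]; field_simp; ring
  set V : Matrix (Fin K) (Fin K) ℝ := vecMulVec γ γ with hV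
  set G' : Matrix (Fin K) (Fin K) ℝ :=
    (c⁻¹ : ℝ) • ((1 : Matrix (Fin K) (Fin K) ℝ) + (c / c₀) • V) with hG'
  have hright : G * G' = 1 := by
    rw [hG, hG', Matrix.smul_mul, Matrix.mul_smul, smul_smul,
      mul_inv_cancel₀ hc', one_smul]
    have hVV : V * V = (γ ⬝ᵥ γ) • V := by rw [hV]; exact vmv_mul γ
    simp only [add_mul, mul_add, Matrix.one_mul, Matrix.mul_one,
      Matrix.smul_mul, Matrix.mul_smul, hVV, smul_smul]
    have hcomb : μ₃ • V + ((c / c₀) • V + (c / c₀ * (μ₃ * (γ ⬝ᵥ γ))) • V)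
        = (0 : Matrix (Fin K) (Fin K) ℝ) := by
      rw [← add_smul, ← add_smul]
      have hz : μ₃ + (c / c₀ + c / c₀ * (μ₃ * (γ ⬝ᵥ γ))) = 0 := by
        rw [hμ₃']; field_simp; ring
      rw [hz, zero_smul]
    rw [add_assoc, hcomb, add_zero]
  have hGinv : G⁻¹ = G' := Matrix.inv_eq_right_inv hright
  have hGinvγ : G⁻¹.mulVec γ = ((c * (γ ⬝ᵥ γ) + c₀) / (c * c₀)) • γ := by
    rw [hGinv, hG', Matrix.smul_mulVec, Matrix.add_mulVec,
      Matrix.one_mulVec, Matrix.smul_mulVec, hV, vmv_mulVec]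
    funext i
    simp only [Pi.smul_apply, Pi.add_apply, smul_eq_mul]
    field_simp
    ring
  have hξ₀' : ξ₀ = μ₀ • γ := by
    rw [hξ₀, hGinvγ, smul_smul]
    congr 1
    rw [hμ₁, hμ₂]
    field_simp
    ring
  have hGq : ∀ v : Fin K → ℝ, G.mulVec v ⬝ᵥ v = c * (v ⬝ᵥ v + μ₃ * (γ ⬝ᵥ v) ^ 2) := by
    intro v
    rw [hG, Matrix.smul_mulVec, Matrix.add_mulVec, Matrix.one_mulVec,
      Matrix.smul_mulVec, hV, vmv_mulVec]
    simp only [smul_dotProduct, add_dotProduct, smul_eq_mul]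
    ring
  have hB0 : B = 0 := by
    have h1 : G.mulVec ξ₀ ⬝ᵥ ξ₀
        = c * (μ₀ ^ 2 * (γ ⬝ᵥ γ) + μ₃ * (μ₀ * (γ ⬝ᵥ γ)) ^ 2) := by
      rw [hξ₀', hGq]
      simp only [smul_dotProduct, dotProduct_smul, smul_eq_mul]
      ring
    rw [hB, h1, hμ₃', hμ₁, hμ₂]
    field_simp
    ring
  intro ξ
  set p : ℝ := ξ ⬝ᵥ γ with hp_def
  set M : ℝ := c₀ * μ₀ ^ 2 / 2 + c * (ξ ⬝ᵥ ξ) / 2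
    - (c₀ * μ₀ + c * p) ^ 2 / (2 * (c * (γ ⬝ᵥ γ) + c₀)) with hM
  set bstar : ℝ := (c₀ * μ₀ + c * p) / (c * (γ ⬝ᵥ γ) + c₀) with hb
  have hf : ∀ b₀ : ℝ,
      c₀ / 2 * (b₀ - μ₀) ^ 2 + c / 2 * ((ξ - b₀ • γ) ⬝ᵥ (ξ - b₀ • γ))
        = M + (c * (γ ⬝ᵥ γ) + c₀) / 2 * (b₀ - bstar) ^ 2 := by
    intro b₀
    have hdot : (ξ - b₀ • γ) ⬝ᵥ (ξ - b₀ • γ)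
        = ξ ⬝ᵥ ξ - 2 * b₀ * p + b₀ ^ 2 * (γ ⬝ᵥ γ) := by
      simp only [sub_dotProduct, dotProduct_sub,
        smul_dotProduct, dotProduct_smul, smul_eq_mul,
        dotProduct_comm γ ξ, ← hp_def]
      ring
    rw [hdot, hM, hb]
    field_simp
    ring
  have hLossξ : Loss ξ = M := by
    rw [hLoss]
    apply le_antisymm
    · have hbdd : BddBelow (Set.range fun b₀ : ℝ =>
          c₀ / 2 * (b₀ - μ₀) ^ 2 + c / 2 * ((ξ - b₀ • γ) ⬝ᵥ (ξ - b₀ • γ))) := by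
        refine ⟨M, ?_⟩
        rintro x ⟨b, rfl⟩
        show M ≤ c₀ / 2 * (b - μ₀) ^ 2 + c / 2 * ((ξ - b • γ) ⬝ᵥ (ξ - b • γ))
        rw [hf b]
        nlinarith [sq_nonneg (b - bstar)]
      have h2 := ciInf_le hbdd bstar
      rw [hf bstar, sub_self] at h2
      simpa using h2
    · refine le_ciInf fun b => ?_
      show M ≤ c₀ / 2 * (b - μ₀) ^ 2 + c / 2 * ((ξ - b • γ) ⬝ᵥ (ξ - b • γ))
      rw [hf b]
      nlinarith [sq_nonneg (b - bstar)]
  have hv : (ξ - ξ₀) ⬝ᵥ (ξ - ξ₀) = ξ ⬝ᵥ ξ - 2 * μ₀ * p + μ₀ ^ 2 * (γ ⬝ᵥ γ) := by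
    rw [hξ₀']
    simp only [sub_dotProduct, dotProduct_sub,
      smul_dotProduct, dotProduct_smul, smul_eq_mul,
      dotProduct_comm γ ξ, ← hp_def]
    ring
  have hγv : γ ⬝ᵥ (ξ - ξ₀) = p - μ₀ * (γ ⬝ᵥ γ) := by
    rw [hξ₀']
    simp only [dotProduct_sub, dotProduct_smul, smul_eq_mul,
      dotProduct_comm γ ξ, ← hp_def]
  rw [hLossξ, hB0, add_zero, hGq, hv, hγv, hμ₃', hM]
  field_simp
  ring
end
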